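/- Let K be a field of characteristic 0 and let c = (c₀, c₁, c₂) be a triple of polynomials in K[x₀,x₁,x₂] such that x₀c₀ + x₁c₁ + x₂c₂ = 0 and such that for every (a b; c d) ∈ SL₂(K), writing σ for the substitution x₀ ↦ a²x₀ + 2ac x₁ + c²x₂, x₁ ↦ ab x₀ + (ad+bc)x₁ + cd x₂, x₂ ↦ b²x₀ + 2bd x₁ + d²x₂ and M for the matrix with columns (a², 2ac, c²), (ab, ad+bc, cd), (b², 2bd, d²), one has Σ_{i=0}^2 M_{j i} σ(c_i) = c_j for all j. Then c = (0,0,0). (That is, when KX₃ ≅ V₂, the commutator ideal of the free metabelian Lie algebra F₃ contains no nonzero SL₂(K)-invariants: (F₃′)^{SL₂(K)} = 0, and hence F₃^{SL₂(K)} = 0.) -/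

import Mathlib

open MvPolynomial

lemma aeval_aeval' {R A : Type*} [CommSemiring R] [CommSemiring A] [Algebra R A] {n m : ℕ}
    (f : Fin m → A) (g : Fin n → MvPolynomial (Fin m) R) (p : MvPolynomial (Fin n) R) :
    aeval f (aeval g p) = aeval (fun i => aeval f (g i)) p := by
  have : (aeval f).comp (aeval g) = (aeval (fun i => aeval f (g i)) : MvPolynomial (Fin n) R →ₐ[R] A) := by
    apply MvPolynomial.algHom_ext; intro i; simp
  exact DFunLike.congr_fun this p

lemma aeval_eq_eval' {R : Type*} [CommSemiring R] {m : ℕ} (x : Fin m → R) (p : MvPolynomial (Fin m) R) :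
    aeval x p = eval x p := rfl

lemma eval_aeval' {R : Type*} [CommSemiring R] {n m : ℕ}
    (x : Fin m → R) (g : Fin n → MvPolynomial (Fin m) R) (p : MvPolynomial (Fin n) R) :
    eval x (aeval g p) = eval (fun i => eval x (g i)) p := by
  rw [← aeval_eq_eval', ← aeval_eq_eval' (fun i => eval x (g i)), aeval_aeval']; rfl

lemma vec3_eta {R : Type*} (x : Fin 3 → R) : ![x 0, x 1, x 2] = x := by
  funext i; fin_cases i <;> rfl

lemma core {L : Type*} [Field L] [IsAlgClosed L] [CharZero L]
    (V0 V1 V2 : MvPolynomial (Fin 3) L)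
    (hrel : X 0 * V0 + X 1 * V1 + X 2 * V2 = 0)
    (hU : ∀ p q r b : L, eval ![p, b*p+q, b^2*p+2*b*q+r] V2 = eval ![p,q,r] V2)
    (hT : ∀ p q r t : L, eval ![t^2*p, q, r] V2 = t^2 * eval ![p, q, t^2*r] V2)
    (hW : V0 = aeval ![X 2, -X 1, X 0] V2) :
    V0 = 0 ∧ V1 = 0 ∧ V2 = 0 := by
  set u : MvPolynomial (Fin 3) L := X 0 * X 2 - X 1 ^ 2 with hu
  set fU : MvPolynomial (Fin 3) L := aeval ![1, 0, u] V2 with hfU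
  -- evaluation of fU
  have evalfU : ∀ x : Fin 3 → L, eval x fU = eval ![1, 0, x 0 * x 2 - x 1 ^ 2] V2 := by
    intro x
    rw [hfU, eval_aeval']
    have hv : (fun i => eval x (![1, 0, u] i)) = ![1, 0, x 0 * x 2 - x 1 ^ 2] := by
      funext i; fin_cases i <;> simp [hu]
    rw [hv]
  -- step 1 : V2 = X 0 * fU
  have hV2 : V2 = X 0 * fU := by
    have key : X 0 * V2 = X 0 * (X 0 * fU) := by
      apply MvPolynomial.funext; intro x
      simp only [map_mul, eval_X]
      by_cases hp : x 0 = 0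
      · rw [hp]; ring
      · obtain ⟨s, hs⟩ : ∃ s : L, s ^ 2 = x 0 := IsAlgClosed.exists_pow_nat_eq (x 0) two_pos
        have hs0 : s ≠ 0 := by rintro rfl; simp at hs; exact hp hs.symm
        have e1 := hU (x 0) (x 1) (x 2) (-(x 1)/(x 0))
        have hvec1 : ![x 0, -(x 1)/(x 0)*(x 0)+ x 1, (-(x 1)/(x 0))^2*(x 0)+2*(-(x 1)/(x 0))*(x 1)+ x 2]
            = ![x 0, 0, x 2 - x 1^2 / x 0] := by
          funext i; fin_cases i
          · rfl
          · show -(x 1)/(x 0)*(x 0)+ x 1 = 0; field_simp; ring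
          · simp only [Matrix.cons_val_two, Matrix.tail_cons, Matrix.head_cons]; field_simp; ring
        rw [hvec1] at e1
        have e2 := hT 1 0 (x 2 - x 1^2 / x 0) s
        rw [hs] at e2
        have hvec2 : ![x 0 * 1, 0, x 2 - x 1^2/x 0] = ![x 0, 0, x 2 - x 1^2/x 0] := by
          funext i; fin_cases i <;> simp
        rw [hvec2] at e2
        have hvec3 : x 0 * (x 2 - x 1^2/ x 0) = x 0 * x 2 - x 1 ^2 := by field_simp
        rw [hvec3] at e2
        rw [vec3_eta x] at e1
        rw [← e1, e2, evalfU x]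
    exact mul_left_cancel₀ (X_ne_zero 0) key
  -- step 2 : V0 = X 2 * fU
  have hsw : aeval ![X 2, -X 1, X 0] fU = fU := by
    rw [hfU, aeval_aeval']
    have hv : (fun i => aeval ![X 2, -X 1, X 0] ((![1, 0, u] : Fin 3 → MvPolynomial (Fin 3) L) i))
        = ![1, 0, u] := by
      funext i; fin_cases i
      · simp
      · simp
      · show aeval ![X 2, -X 1, X 0] u = u
        rw [hu]; simp; ring
    rw [hv]
  have hV0 : V0 = X 2 * fU := by
    rw [hW, hV2, map_mul, hsw]
    congr 1
    simp
  have h3 : X 1 * V1 = -(2 * (X 0 * (X 2 * fU))) := by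
    rw [hV2, hV0] at hrel; linear_combination hrel
  -- step 4
  have hpsi_fU : aeval (![X 0, 0, 1] : Fin 3 → MvPolynomial (Fin 3) L) fU = aeval (![1, 0, X 0] : Fin 3 → MvPolynomial (Fin 3) L) V2 := by
    rw [hfU, aeval_aeval']
    have hv : (fun i => aeval ![X 0, 0, 1] ((![1, 0, u] : Fin 3 → MvPolynomial (Fin 3) L) i))
        = (![1, 0, X 0] : Fin 3 → MvPolynomial (Fin 3) L) := by
      funext i; fin_cases i
      · simp
      · simp
      · show aeval ![X 0, 0, 1] u = X 0
        rw [hu]; simp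
    rw [hv]
  have h4 := congrArg (aeval (![X 0, 0, 1] : Fin 3 → MvPolynomial (Fin 3) L)) h3
  simp only [map_mul, map_neg, aeval_X, map_ofNat, hpsi_fU, Matrix.cons_val_zero,
    Matrix.cons_val_one, Matrix.cons_val_two, Matrix.tail_cons, Matrix.head_cons, zero_mul] at h4
  have h6 : aeval (![1, 0, X 0] : Fin 3 → MvPolynomial (Fin 3) L) V2 = 0 := by
    have h4' := h4.symm
    rw [neg_eq_zero] at h4'
    rcases mul_eq_zero.1 h4' with h | h
    · exact absurd h two_ne_zero
    · rcases mul_eq_zero.1 h with h' | h'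
      · exact absurd h' (X_ne_zero 0)
      · rcases mul_eq_zero.1 h' with h'' | h''
        · exact absurd h'' one_ne_zero
        · exact h''
  -- step 5 : fU = 0
  have hfU0 : fU = 0 := by
    have h7 := congrArg (aeval (![u, X 1, X 2] : Fin 3 → MvPolynomial (Fin 3) L)) h6
    rw [aeval_aeval'] at h7
    have hv : (fun i => aeval ![u, X 1, X 2] ((![1, 0, X 0] : Fin 3 → MvPolynomial (Fin 3) L) i))
        = ![1, 0, u] := by
      funext i; fin_cases i <;> simp
    rw [hv] at h7
    rw [hfU]
    simpa using h7
  have hV2' : V2 = 0 := by rw [hV2, hfU0, mul_zero]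
  have hV0' : V0 = 0 := by rw [hV0, hfU0, mul_zero]
  refine ⟨hV0', ?_, hV2'⟩
  rw [hfU0] at h3
  simp only [mul_zero, neg_zero] at h3
  rcases mul_eq_zero.1 h3 with h | h
  · exact absurd h (X_ne_zero 1)
  · exact h

lemma map_aeval' {R S : Type*} [CommSemiring R] [CommSemiring S] (φ : R →+* S) {n m : ℕ}
    (g : Fin n → MvPolynomial (Fin m) R) (p : MvPolynomial (Fin n) R) :
    map φ (aeval g p) = aeval (fun i => map φ (g i)) (map φ p) := by
  rw [aeval_def, aeval_def, eval₂_map, eval₂_comp_left (map φ)]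
  congr 1
  ext r
  simp

/-- When `KX₃ ≅ V₂`, the commutator ideal of the free metabelian Lie algebra `F₃`
contains no nonzero `SL₂(K)`-invariants: a tuple `v = (v₀,v₁,v₂)` of polynomials with
`Σ_i x_i v_i = 0` (Shmel'kin's identification of `F₃′`) that is fixed by the action of
every element of `SL₂(K)` must be zero. Hence `F₃^{SL₂(K)} = 0`. -/
theorem stmt_13 {K : Type*} [Field K] [CharZero K]
    (v : Fin 3 → MvPolynomial (Fin 3) K)
    (hrel : ∑ i, X i * v i = 0)
    (hinv : ∀ a b c d : K, a * d - b * c = 1 →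
      ∀ j, ∑ i, C ((![![a ^ 2, a * b, b ^ 2],
                      ![2 * a * c, a * d + b * c, 2 * b * d],
                      ![c ^ 2, c * d, d ^ 2]] : Fin 3 → Fin 3 → K) j i) *
        aeval ![C (a ^ 2) * X 0 + C (2 * a * c) * X 1 + C (c ^ 2) * X 2,
                C (a * b) * X 0 + C (a * d + b * c) * X 1 + C (c * d) * X 2,
                C (b ^ 2) * X 0 + C (2 * b * d) * X 1 + C (d ^ 2) * X 2] (v i) = v j) :
    v = 0 := by
  -- Weyl element identity
  have hW0 : v 0 = aeval ![X 2, -X 1, X 0] (v 2) := by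
    have h := hinv 0 1 (-1) 0 (by norm_num) 0
    norm_num [Fin.sum_univ_three, Matrix.cons_val_zero, Matrix.cons_val_one, Matrix.cons_val_two, Matrix.tail_cons, Matrix.head_cons] at h
    rw [← aeval_eq_bind₁] at h
    exact h.symm
  -- unipotent identity, as a 4-variable polynomial identity
  have IU : (aeval ![X 0, X 3 * X 0 + X 1, X 3 ^ 2 * X 0 + 2 * X 3 * X 1 + X 2] (v 2) : MvPolynomial (Fin 4) K)
      = aeval ![X 0, X 1, X 2] (v 2) := by
    apply MvPolynomial.funext; intro x
    rw [eval_aeval', eval_aeval']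
    have h := hinv 1 (x 3) 0 1 (by norm_num) 2
    norm_num [Fin.sum_univ_three, Matrix.cons_val_zero, Matrix.cons_val_one, Matrix.cons_val_two, Matrix.tail_cons, Matrix.head_cons] at h
    rw [← aeval_eq_bind₁] at h
    have h2 := congrArg (eval ![x 0, x 1, x 2]) h
    rw [eval_aeval'] at h2
    have e1 : (fun i => eval x ((![X 0, X 3 * X 0 + X 1, X 3 ^ 2 * X 0 + 2 * X 3 * X 1 + X 2] : Fin 3 → MvPolynomial (Fin 4) K) i))
        = (fun i => eval ![x 0, x 1, x 2] ((![X 0, C (x 3) * X 0 + X 1, C (x 3) ^ 2 * X 0 + C 2 * C (x 3) * X 1 + X 2] : Fin 3 → MvPolynomial (Fin 3) K) i)) := by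
      funext i; fin_cases i <;> simp
    have e2 : (fun i => eval x ((![X 0, X 1, X 2] : Fin 3 → MvPolynomial (Fin 4) K) i))
        = ![x 0, x 1, x 2] := by
      funext i; fin_cases i <;> simp
    rw [e1, e2, h2]
  -- torus identity, as a 4-variable polynomial identity
  have IT' : (aeval ![X 3 ^ 2 * X 0, X 1, X 2] (v 2) : MvPolynomial (Fin 4) K)
      = X 3 ^ 2 * aeval ![X 0, X 1, X 3 ^ 2 * X 2] (v 2) := by
    have IT : (X 3 : MvPolynomial (Fin 4) K) * aeval ![X 3 ^ 2 * X 0, X 1, X 2] (v 2)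
        = X 3 * (X 3 ^ 2 * aeval ![X 0, X 1, X 3 ^ 2 * X 2] (v 2)) := by
      apply MvPolynomial.funext; intro x
      simp only [map_mul, eval_X, map_pow]
      by_cases ht : x 3 = 0
      · rw [ht]; ring
      · congr 1
        rw [eval_aeval', eval_aeval']
        have h := hinv (x 3) 0 0 (x 3)⁻¹ (by field_simp; norm_num) 2
        norm_num [Fin.sum_univ_three, mul_inv_cancel₀ ht, Matrix.cons_val_zero, Matrix.cons_val_one, Matrix.cons_val_two, Matrix.tail_cons, Matrix.head_cons] at h
        rw [← aeval_eq_bind₁] at h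
        have h2 := congrArg (eval ![x 0, x 1, x 3 ^ 2 * x 2]) h
        rw [map_mul, eval_C, eval_aeval'] at h2
        have e1 : (fun i => eval ![x 0, x 1, x 3 ^ 2 * x 2] ((![C (x 3) ^ 2 * X 0, X 1, C (x 3 ^ 2)⁻¹ * X 2] : Fin 3 → MvPolynomial (Fin 3) K) i))
            = (fun i => eval x ((![X 3 ^ 2 * X 0, X 1, X 2] : Fin 3 → MvPolynomial (Fin 4) K) i)) := by
          funext i; fin_cases i <;> (simp; try field_simp)
        have e2 : (fun i => eval x ((![X 0, X 1, X 3 ^ 2 * X 2] : Fin 3 → MvPolynomial (Fin 4) K) i))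
            = ![x 0, x 1, x 3 ^ 2 * x 2] := by
          funext i; fin_cases i <;> simp
        rw [e1] at h2
        rw [e2, ← h2]
        field_simp
    exact mul_left_cancel₀ (X_ne_zero 3) IT
  -- pass to the algebraic closure
  set L := AlgebraicClosure K with hL
  haveI : CharZero L := charZero_of_injective_algebraMap (algebraMap K L).injective
  set φ := algebraMap K L with hφ
  have evmap : ∀ (y : Fin 3 → L) (p : MvPolynomial (Fin 3) K),
      eval y (map φ p) = aeval y p := fun y p => by rw [eval_map, aeval_def]
  have hrel3 : X 0 * v 0 + X 1 * v 1 + X 2 * v 2 = 0 := by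
    rw [Fin.sum_univ_three] at hrel; exact hrel
  have hrel_L : X 0 * map φ (v 0) + X 1 * map φ (v 1) + X 2 * map φ (v 2) = 0 := by
    have := congrArg (map φ) hrel3
    simpa using this
  have hW_L : map φ (v 0) = aeval ![X 2, -X 1, X 0] (map φ (v 2)) := by
    have := congrArg (map φ) hW0
    rw [map_aeval'] at this
    have e : (fun i => map φ ((![X 2, -X 1, X 0] : Fin 3 → MvPolynomial (Fin 3) K) i))
        = (![X 2, -X 1, X 0] : Fin 3 → MvPolynomial (Fin 3) L) := by
      funext i; fin_cases i <;> simp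
    rwa [e] at this
  have hU_L : ∀ p q r b : L, eval ![p, b*p+q, b^2*p+2*b*q+r] (map φ (v 2)) = eval ![p,q,r] (map φ (v 2)) := by
    intro p q r b
    have h := congrArg (aeval (![p, q, r, b] : Fin 4 → L)) IU
    rw [aeval_aeval', aeval_aeval'] at h
    rw [evmap, evmap]
    have e1 : (fun i => aeval (![p, q, r, b] : Fin 4 → L) ((![X 0, X 3 * X 0 + X 1, X 3 ^ 2 * X 0 + 2 * X 3 * X 1 + X 2] : Fin 3 → MvPolynomial (Fin 4) K) i))
        = ![p, b*p+q, b^2*p+2*b*q+r] := by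
      funext i; fin_cases i <;> simp
    have e2 : (fun i => aeval (![p, q, r, b] : Fin 4 → L) ((![X 0, X 1, X 2] : Fin 3 → MvPolynomial (Fin 4) K) i))
        = ![p, q, r] := by
      funext i; fin_cases i <;> simp
    rw [e1, e2] at h
    exact h
  have hT_L : ∀ p q r t : L, eval ![t^2*p, q, r] (map φ (v 2)) = t^2 * eval ![p, q, t^2*r] (map φ (v 2)) := by
    intro p q r t
    have h := congrArg (aeval (![p, q, r, t] : Fin 4 → L)) IT'
    rw [map_mul, map_pow, aeval_X, aeval_aeval', aeval_aeval'] at h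
    rw [evmap, evmap]
    have e1 : (fun i => aeval (![p, q, r, t] : Fin 4 → L) ((![X 3 ^ 2 * X 0, X 1, X 2] : Fin 3 → MvPolynomial (Fin 4) K) i))
        = ![t^2*p, q, r] := by
      funext i; fin_cases i <;> simp
    have e2 : (fun i => aeval (![p, q, r, t] : Fin 4 → L) ((![X 0, X 1, X 3 ^ 2 * X 2] : Fin 3 → MvPolynomial (Fin 4) K) i))
        = ![p, q, t^2*r] := by
      funext i; fin_cases i <;> simp
    rw [e1, e2] at h
    have h34 : (![p, q, r, t] : Fin 4 → L) 3 = t := rfl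
    rw [h34] at h
    exact h
  obtain ⟨h0, h1, h2⟩ := core (map φ (v 0)) (map φ (v 1)) (map φ (v 2)) hrel_L hU_L hT_L hW_L
  have inj : Function.Injective (map φ : MvPolynomial (Fin 3) K → MvPolynomial (Fin 3) L) :=
    MvPolynomial.map_injective φ (algebraMap K L).injective
  have hall : ∀ i, map φ (v i) = 0 := by
    intro i; fin_cases i <;> assumption
  funext i
  show v i = 0
  exact inj (by rw [hall i, map_zero])
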